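/- Let C ⊆ ℝ^N be open and convex, λ₁,…,λ_m ∈ (0,1] with ∑λ_k = 1, points x₁ ≥ ⋯ ≥ x_m in C and y₁,…,y_m in C with ∑_{k=1}^n λ_k x_k ≤ ∑_{k=1}^n λ_k y_k for all n = 1,…,m (weak L↓-majorization). If Φ : C → ℝ is Gâteaux differentiable, convex, isotone, and has isotone gradient, then ∑_{k=1}^n λ_k Φ(y_k) ≥ ∑_{k=1}^n λ_k Φ(x_k) for every n = 1,…,m. -/

import Mathlib

open Filter Set Topology

/-- Gradient inequality for convex functions. -/
lemma aux_grad_le {N : ℕ} {C : Set (Fin N → ℝ)} {Φ : (Fin N → ℝ) → ℝ}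
    (hconv : ConvexOn ℝ C Φ) {a b : Fin N → ℝ} (ha : a ∈ C) (hb : b ∈ C)
    (hd : DifferentiableAt ℝ Φ a) :
    fderiv ℝ Φ a (b - a) ≤ Φ b - Φ a := by
  set v := b - a with hvdef
  have hc : HasDerivAt (fun t : ℝ => a + t • v) v 0 := by
    simpa using ((hasDerivAt_id (0:ℝ)).smul_const v).const_add a
  have hφ : HasDerivAt (fun t : ℝ => Φ (a + t • v)) (fderiv ℝ Φ a v) 0 := by
    have hf : HasFDerivAt Φ (fderiv ℝ Φ a) (a + (0:ℝ) • v) := by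
      simpa using hd.hasFDerivAt
    exact hf.comp_hasDerivAt 0 hc
  have htend : Tendsto (slope (fun t : ℝ => Φ (a + t • v)) 0) (𝓝[>] (0:ℝ))
      (𝓝 (fderiv ℝ Φ a v)) :=
    (hasDerivAt_iff_tendsto_slope.1 hφ).mono_left
      (nhdsWithin_mono _ (fun t ht => ne_of_gt ht))
  refine le_of_tendsto htend ?_
  filter_upwards [Ioo_mem_nhdsGT_of_mem (by norm_num : (0:ℝ) ∈ Set.Ico 0 1)] with t ht
  have ht0 : 0 < t := ht.1
  have ht1 : t < 1 := ht.2
  have hmem : a + t • v = (1 - t) • a + t • b := by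
    rw [hvdef]; rw [smul_sub, sub_smul, one_smul]; abel
  have hcvx := hconv.2 ha hb (by linarith : (0:ℝ) ≤ 1 - t) ht0.le (by ring)
  rw [← hmem] at hcvx
  rw [slope_def_field]
  simp only [zero_smul, add_zero, sub_zero]
  rw [div_le_iff₀ ht0]
  simp only [smul_eq_mul] at hcvx
  nlinarith [hcvx]

/-- Nonnegativity of directional derivative of an isotone function in a nonneg direction. -/
lemma aux_grad_nonneg {N : ℕ} {C : Set (Fin N → ℝ)} (hCo : IsOpen C)
    {Φ : (Fin N → ℝ) → ℝ} (hiso : MonotoneOn Φ C) {a : Fin N → ℝ} (ha : a ∈ C)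
    (hd : DifferentiableAt ℝ Φ a) {v : Fin N → ℝ} (hv : 0 ≤ v) :
    0 ≤ fderiv ℝ Φ a v := by
  have hc : HasDerivAt (fun t : ℝ => a + t • v) v 0 := by
    simpa using ((hasDerivAt_id (0:ℝ)).smul_const v).const_add a
  have hφ : HasDerivAt (fun t : ℝ => Φ (a + t • v)) (fderiv ℝ Φ a v) 0 := by
    have hf : HasFDerivAt Φ (fderiv ℝ Φ a) (a + (0:ℝ) • v) := by
      simpa using hd.hasFDerivAt
    exact hf.comp_hasDerivAt 0 hc
  have htend : Tendsto (slope (fun t : ℝ => Φ (a + t • v)) 0) (𝓝[>] (0:ℝ))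
      (𝓝 (fderiv ℝ Φ a v)) :=
    (hasDerivAt_iff_tendsto_slope.1 hφ).mono_left
      (nhdsWithin_mono _ (fun t ht => ne_of_gt ht))
  refine ge_of_tendsto htend ?_
  have hcont : Continuous (fun t : ℝ => a + t • v) :=
    continuous_const.add (continuous_id.smul continuous_const)
  have hmemC : ∀ᶠ t in 𝓝 (0:ℝ), a + t • v ∈ C := by
    have : (fun t : ℝ => a + t • v) ⁻¹' C ∈ 𝓝 (0:ℝ) :=
      (hCo.preimage hcont).mem_nhds (by simpa using ha)
    exact this
  filter_upwards [self_mem_nhdsWithin, eventually_nhdsWithin_of_eventually_nhds hmemC]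
    with t ht htC
  have ht0 : (0:ℝ) < t := ht
  have hle : a ≤ a + t • v := by
    intro i
    simp only [Pi.add_apply, Pi.smul_apply, smul_eq_mul, le_add_iff_nonneg_right]
    exact mul_nonneg ht0.le (hv i)
  have := hiso ha htC hle
  rw [slope_def_field]
  simp only [zero_smul, add_zero, sub_zero]
  exact div_nonneg (sub_nonneg.2 this) ht0.le

/-- Monotonicity of the gradient applied to a nonnegative vector. -/
lemma aux_grad_mono {N : ℕ} {C : Set (Fin N → ℝ)} {Φ : (Fin N → ℝ) → ℝ}
    (hgrad : ∀ u ∈ C, ∀ v ∈ C, u ≤ v →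
      ∀ i : Fin N, fderiv ℝ Φ u (Pi.single i 1) ≤ fderiv ℝ Φ v (Pi.single i 1))
    {u u' : Fin N → ℝ} (hu : u ∈ C) (hu' : u' ∈ C) (huu : u ≤ u')
    {v : Fin N → ℝ} (hv : 0 ≤ v) :
    fderiv ℝ Φ u v ≤ fderiv ℝ Φ u' v := by
  have hv' : v = ∑ i : Fin N, v i • (Pi.single i 1 : Fin N → ℝ) := by
    ext j
    simp [Pi.single_apply, Finset.sum_apply, eq_comm]
  rw [hv', map_sum, map_sum]
  refine Finset.sum_le_sum fun i _ => ?_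
  rw [map_smul, map_smul, smul_eq_mul, smul_eq_mul]
  exact mul_le_mul_of_nonneg_left (hgrad u hu u' hu' huu i) (hv i)

/-- Weak L↓-majorization case: if in addition `Φ` is isotone, the partial-sum
inequalities `∑_{k≤n} λₖ Φ(yₖ) ≥ ∑_{k≤n} λₖ Φ(xₖ)` hold for every `n = 1,…,m`. -/
theorem stmt13 (N m : ℕ) (C : Set (Fin N → ℝ)) (hCo : IsOpen C) (hCc : Convex ℝ C)
    (w : ℕ → ℝ) (hw : ∀ k < m, 0 < w k ∧ w k ≤ 1)
    (hw1 : ∑ k ∈ Finset.range m, w k = 1)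
    (x y : ℕ → Fin N → ℝ) (hxC : ∀ k < m, x k ∈ C) (hyC : ∀ k < m, y k ∈ C)
    (hdec : ∀ i j, i ≤ j → j < m → x j ≤ x i)
    (hmaj : ∀ n ≤ m, ∑ k ∈ Finset.range n, w k • x k ≤ ∑ k ∈ Finset.range n, w k • y k)
    (Φ : (Fin N → ℝ) → ℝ)
    (hdiff : ∀ z ∈ C, DifferentiableAt ℝ Φ z) (hconv : ConvexOn ℝ C Φ)
    (hiso : MonotoneOn Φ C)
    (hgrad : ∀ u ∈ C, ∀ v ∈ C, u ≤ v →
      ∀ i : Fin N, fderiv ℝ Φ u (Pi.single i 1) ≤ fderiv ℝ Φ v (Pi.single i 1)) :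
    ∀ n ≤ m, ∑ k ∈ Finset.range n, w k * Φ (x k) ≤ ∑ k ∈ Finset.range n, w k * Φ (y k) := by
  set S : ℕ → Fin N → ℝ := fun n => ∑ k ∈ Finset.range n, w k • (y k - x k) with hS
  have hSnonneg : ∀ n ≤ m, 0 ≤ S n := by
    intro n hn
    have h := hmaj n hn
    have heq : S n = ∑ k ∈ Finset.range n, w k • y k - ∑ k ∈ Finset.range n, w k • x k := by
      rw [hS, ← Finset.sum_sub_distrib]
      exact Finset.sum_congr rfl fun k _ => smul_sub _ _ _
    rw [heq]
    exact sub_nonneg.2 h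
  have key : ∀ n, n < m →
      fderiv ℝ Φ (x n) (S (n+1)) ≤
        ∑ k ∈ Finset.range (n+1), (w k * Φ (y k) - w k * Φ (x k)) := by
    intro n
    induction n with
    | zero =>
      intro h0
      have hgi := aux_grad_le hconv (hxC 0 h0) (hyC 0 h0) (hdiff _ (hxC 0 h0))
      have hS1 : S 1 = w 0 • (y 0 - x 0) := by rw [hS]; simp
      rw [hS1, map_smul, smul_eq_mul, Finset.sum_range_one]
      have hw0 := (hw 0 h0).1
      nlinarith [mul_le_mul_of_nonneg_left hgi hw0.le]
    | succ n ih =>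
      intro hn1
      have hn : n < m := Nat.lt_of_succ_lt hn1
      have hstep := aux_grad_le hconv (hxC (n+1) hn1) (hyC (n+1) hn1)
        (hdiff _ (hxC (n+1) hn1))
      have hmono := aux_grad_mono hgrad (hxC (n+1) hn1) (hxC n hn)
        (hdec n (n+1) (Nat.le_succ n) hn1) (hSnonneg (n+1) hn1.le)
      have hSsucc : S (n+2) = S (n+1) + w (n+1) • (y (n+1) - x (n+1)) := by
        rw [hS]; exact Finset.sum_range_succ _ _
      rw [hSsucc, map_add, map_smul, Finset.sum_range_succ]
      have hw' := (hw (n+1) hn1).1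
      have h2 : w (n+1) • fderiv ℝ Φ (x (n+1)) (y (n+1) - x (n+1)) ≤
          w (n+1) * Φ (y (n+1)) - w (n+1) * Φ (x (n+1)) := by
        rw [smul_eq_mul]
        nlinarith [mul_le_mul_of_nonneg_left hstep hw'.le]
      exact add_le_add (le_trans hmono (ih hn)) h2
  intro n hn
  rw [← sub_nonneg, ← Finset.sum_sub_distrib]
  cases n with
  | zero => simp
  | succ n' =>
    have hn' : n' < m := hn
    have h0 := aux_grad_nonneg hCo hiso (hxC n' hn') (hdiff _ (hxC n' hn'))
      (hSnonneg (n'+1) hn)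
    exact le_trans h0 (key n' hn')
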